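/- If f : C → ℝ is wa-differentiable and, for each x, y ∈ C, the map t ↦ Df(x_t; y) is continuous on [0,1] and t ↦ Df(x_t; x) is continuous on [0,1] (where x_t = (1−t)x + ty), then f(y) − f(x) = ∫₀¹ (1/(1−t)) Df(x_t; y) dt for all x, y ∈ C. -/

import Mathlib

open Set Filter Topology intervalIntegral

lemma slope_aux {X : Type*} [AddCommGroup X] [Module ℝ X]
    (f : X → ℝ) (z w : X) (L a t : ℝ) (ha : a ≠ 0) (c : ℝ → X)
    (hc : ∀ s : ℝ, c s = (1 - (s - t)/a) • z + ((s - t)/a) • w)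
    (S : Set ℝ) (hS : ∀ s ∈ S, 0 < (s - t)/a)
    (hq : Tendsto (fun u : ℝ => (f ((1 - u) • z + u • w) - f z)/u) (𝓝[>] (0:ℝ)) (𝓝 L)) :
    HasDerivWithinAt (fun s => f (c s)) (L / a) S t := by
  have hct : c t = z := by rw [hc t]; simp
  rw [hasDerivWithinAt_iff_tendsto_slope]
  have hmap : Tendsto (fun s : ℝ => (s - t)/a) (𝓝[S \ {t}] t) (𝓝[>] (0:ℝ)) := by
    rw [tendsto_nhdsWithin_iff]
    constructor
    · have h0 : Tendsto (fun s : ℝ => (s - t)/a) (𝓝 t) (𝓝 ((t - t)/a)) :=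
        (tendsto_id.sub_const t).div_const a
      simpa using h0.mono_left nhdsWithin_le_nhds
    · exact eventually_nhdsWithin_of_forall (fun s hs => hS s hs.1)
  have hcomp := (hq.comp hmap).div_const a
  refine Filter.Tendsto.congr' ?_ hcomp
  refine eventually_nhdsWithin_of_forall (fun s hs => ?_)
  have hu : 0 < (s - t)/a := hS s hs.1
  have hst : s - t = ((s - t)/a) * a := by field_simp
  show (f ((1 - (s - t)/a) • z + ((s - t)/a) • w) - f z) / ((s - t)/a) / a
      = slope (fun s => f (c s)) t s
  rw [slope_def_field, hc s, hct, div_div]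
  congr 1
  exact hst.symm

theorem stmt_7 {X : Type*} [AddCommGroup X] [Module ℝ X]
    (C : Set X) (hC : Convex ℝ C) (f : X → ℝ) (D : X → X → ℝ)
    (hD : ∀ x ∈ C, ∀ y ∈ C,
      Tendsto (fun t : ℝ => (f ((1 - t) • x + t • y) - f x) / t)
        (𝓝[>] 0) (𝓝 (D x y)))
    (haff : ∀ x ∈ C, ∀ y ∈ C, ∀ z ∈ C, ∀ t ∈ Set.Icc (0:ℝ) 1,
      D x ((1 - t) • y + t • z) = (1 - t) * D x y + t * D x z)
    (hcont1 : ∀ x ∈ C, ∀ y ∈ C,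
      ContinuousOn (fun t : ℝ => D ((1 - t) • x + t • y) y) (Set.Icc 0 1))
    (hcont2 : ∀ x ∈ C, ∀ y ∈ C,
      ContinuousOn (fun t : ℝ => D ((1 - t) • x + t • y) x) (Set.Icc 0 1)) :
    ∀ x ∈ C, ∀ y ∈ C,
      f y - f x = ∫ t in (0:ℝ)..1, (1 - t)⁻¹ * D ((1 - t) • x + t • y) y := by
  -- D z z = 0 for z ∈ C
  have hDzz : ∀ z ∈ C, D z z = 0 := by
    intro z hz
    have h0 := hD z hz z hz
    have h1 : Tendsto (fun t : ℝ => (f ((1 - t) • z + t • z) - f z)/t)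
        (𝓝[>] (0:ℝ)) (𝓝 0) := by
      have hz' : ∀ t : ℝ, (1 - t) • z + t • z = z := fun t => by module
      simp only [hz', sub_self, zero_div]
      exact tendsto_const_nhds
    exact tendsto_nhds_unique h0 h1
  intro x hx y hy
  set c : ℝ → X := fun t => (1 - t) • x + t • y with hcdef
  have hmem : ∀ t ∈ Icc (0:ℝ) 1, c t ∈ C := fun t ht =>
    hC hx hy (by linarith [ht.2]) ht.1 (by ring)
  -- curve identities
  have hcright : ∀ t : ℝ, t ≠ 1 → ∀ s : ℝ,
      c s = (1 - (s - t)/(1 - t)) • (c t) + ((s - t)/(1 - t)) • y := by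
    intro t ht s
    have h1 : (1:ℝ) - t ≠ 0 := sub_ne_zero.2 (Ne.symm ht)
    simp only [hcdef]
    match_scalars <;> field_simp <;> ring
  have hcleft : ∀ t : ℝ, t ≠ 0 → ∀ s : ℝ,
      c s = (1 - (s - t)/(-t)) • (c t) + ((s - t)/(-t)) • x := by
    intro t ht s
    simp only [hcdef]
    match_scalars <;> (rw [div_neg]; field_simp; try ring)
  set g : ℝ → ℝ := fun s => f (c s) with hgdef
  -- key algebraic identity
  have key : ∀ t : ℝ, 0 ≤ t → t < 1 →
      D (c t) y / (1 - t) = D (c t) y - D (c t) x := by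
    intro t ht0 ht1
    have hct := hmem t ⟨ht0, ht1.le⟩
    have h0 := hDzz (c t) hct
    have ha := haff (c t) hct x hx y hy t ⟨ht0, ht1.le⟩
    have hct' : (1 - t) • x + t • y = c t := rfl
    rw [hct', h0] at ha
    have h1 : (1:ℝ) - t ≠ 0 := ne_of_gt (by linarith)
    rw [div_eq_iff h1]
    linear_combination -ha
  -- right derivative
  have hderiv : ∀ t ∈ Ioo (0:ℝ) 1,
      HasDerivWithinAt g (D (c t) y - D (c t) x) (Ioi t) t := by
    intro t ht
    have hct := hmem t ⟨ht.1.le, ht.2.le⟩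
    have h1 : (1:ℝ) - t ≠ 0 := ne_of_gt (by linarith [ht.2])
    have hd := slope_aux f (c t) y (D (c t) y) (1 - t) t h1 c
      (hcright t (ne_of_lt ht.2)) (Ioi t)
      (fun s hs => div_pos (sub_pos.2 hs) (by linarith [ht.2]))
      (hD (c t) hct y hy)
    rwa [key t ht.1.le ht.2] at hd
  -- continuity of g on [0,1]
  have hgright : ∀ t : ℝ, 0 ≤ t → t < 1 → ContinuousWithinAt g (Ici t) t := by
    intro t ht0 ht1
    have hct := hmem t ⟨ht0, ht1.le⟩
    have h1 : (1:ℝ) - t ≠ 0 := ne_of_gt (by linarith)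
    have hd := slope_aux f (c t) y (D (c t) y) (1 - t) t h1 c
      (hcright t (ne_of_lt ht1)) (Ioi t)
      (fun s hs => div_pos (sub_pos.2 hs) (by linarith))
      (hD (c t) hct y hy)
    exact continuousWithinAt_Ioi_iff_Ici.mp hd.continuousWithinAt
  have hgleft : ∀ t : ℝ, 0 < t → t ≤ 1 → ContinuousWithinAt g (Iic t) t := by
    intro t ht0 ht1
    have hct := hmem t ⟨ht0.le, ht1⟩
    have hnt : (-t : ℝ) ≠ 0 := neg_ne_zero.2 (ne_of_gt ht0)
    have hd := slope_aux f (c t) x (D (c t) x) (-t) t hnt c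
      (hcleft t (ne_of_gt ht0)) (Iio t)
      (fun s hs => div_pos_of_neg_of_neg (sub_neg.2 hs) (neg_lt_zero.2 ht0))
      (hD (c t) hct x hx)
    exact continuousWithinAt_Iio_iff_Iic.mp hd.continuousWithinAt
  have hgcont : ContinuousOn g (Icc 0 1) := by
    intro t ht
    rcases eq_or_lt_of_le ht.1 with h0 | h0
    · exact (hgright t (le_of_eq h0) (by linarith [h0.symm ▸ (zero_lt_one (α := ℝ))])).mono
        (h0 ▸ Icc_subset_Ici_self)
    rcases eq_or_lt_of_le ht.2 with h1 | h1
    · exact (hgleft t h0 ht.2).mono (h1 ▸ Icc_subset_Iic_self)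
    · refine ((hgleft t h0 ht.2).union (hgright t ht.1 h1)).mono (fun s _ => ?_)
      rcases le_total s t with h | h
      · exact Or.inl h
      · exact Or.inr h
  -- integrability
  have hint : IntervalIntegrable (fun t => D (c t) y - D (c t) x)
      MeasureTheory.volume 0 1 := by
    apply ContinuousOn.intervalIntegrable
    rw [uIcc_of_le zero_le_one]
    exact (hcont1 x hx y hy).sub (hcont2 x hx y hy)
  have hftc := intervalIntegral.integral_eq_sub_of_hasDeriv_right_of_le zero_le_one
    hgcont hderiv hint
  -- a.e. equality of integrands
  have h1ae : ∀ᵐ (t : ℝ) ∂MeasureTheory.volume, t ≠ (1:ℝ) := by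
    refine MeasureTheory.ae_iff.mpr ?_
    simp only [not_not, ne_eq]
    simpa using Real.volume_singleton (a := (1:ℝ))
  have hcongr : ∀ᵐ (t : ℝ) ∂MeasureTheory.volume, t ∈ Set.uIoc (0:ℝ) 1 →
      (1 - t)⁻¹ * D ((1 - t) • x + t • y) y = D (c t) y - D (c t) x := by
    refine h1ae.mono (fun t ht hti => ?_)
    rw [uIoc_of_le zero_le_one] at hti
    have ht1 : t < 1 := lt_of_le_of_ne hti.2 ht
    have := key t hti.1.le ht1
    rw [div_eq_inv_mul] at this
    exact this
  calc f y - f x = g 1 - g 0 := by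
        simp only [hgdef, hcdef]
        norm_num
      _ = ∫ t in (0:ℝ)..1, (D (c t) y - D (c t) x) := hftc.symm
      _ = ∫ t in (0:ℝ)..1, (1 - t)⁻¹ * D ((1 - t) • x + t • y) y :=
        (intervalIntegral.integral_congr_ae hcongr).symm
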